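/- arXiv:1611.06872 — 4 statements merged into one kernel-verified Lean document; each statement's English description precedes it below -/
import Mathlib

section
/- Let k₁ > 0 and k₂ > 0 be real parameters. For all real x, y with |x| > |y|, the kernel K(x,y) is strictly positive: K(x,y) > 0. -/
open Real MeasureTheory intervalIntegral

noncomputable section

/-- `A(x) = |2 sinh(x/2)|^{2k₁} · |2 sinh x|^{2k₂}` -/
def A (k₁ k₂ x : ℝ) : ℝ :=
  |2 * Real.sinh (x / 2)| ^ (2 * k₁) * |2 * Real.sinh x| ^ (2 * k₂)

/-- `c = 2^{3k₁+3k₂} · Γ(k₁+k₂+1/2) / (√π · Γ(k₁) · Γ(k₂))` -/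
def c (k₁ k₂ : ℝ) : ℝ :=
  2 ^ (3 * k₁ + 3 * k₂) * Real.Gamma (k₁ + k₂ + 1 / 2) /
    (Real.sqrt Real.pi * Real.Gamma k₁ * Real.Gamma k₂)

/-- `σ(x,y,z) = sign(x)·( e^{x/2}·(2 cosh(x/2)) − e^{−y/2}·(2 cosh(z/2)) )` -/
def sigmaK (x y z : ℝ) : ℝ :=
  Real.sign x *
    (Real.exp (x / 2) * (2 * Real.cosh (x / 2)) -
      Real.exp (-y / 2) * (2 * Real.cosh (z / 2)))

/-- The kernel `K(x,y)` of the intertwining operator, for `|x| > |y|`. -/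
def K (k₁ k₂ x y : ℝ) : ℝ :=
  c k₁ k₂ / 4 * (A k₁ k₂ x)⁻¹ *
    ∫ z in |y|..|x|,
      sigmaK x y z * (Real.cosh (z / 2) - Real.cosh (y / 2)) ^ (k₁ - 1) *
        (Real.cosh x - Real.cosh z) ^ (k₂ - 1) * Real.sinh (z / 2)

end

section Aux

open Set

private lemma exp_mul_two_cosh (u v : ℝ) :
    Real.exp u * (2 * Real.cosh v) = Real.exp (u + v) + Real.exp (u - v) := by
  rw [Real.cosh_eq, Real.exp_add, Real.exp_sub, Real.exp_neg]
  field_simp [Real.exp_ne_zero]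

private lemma sinh_half_identity (z : ℝ) :
    Real.sinh z = 2 * Real.sinh (z / 2) * Real.cosh (z / 2) := by
  have := Real.sinh_two_mul (z / 2)
  rwa [show 2 * (z / 2) = z by ring] at this

private lemma sigmaK_pos {x y z : ℝ} (h1 : |y| < z) (h2 : z < |x|) : 0 < sigmaK x y z := by
  have hy1 : -y < z := lt_of_le_of_lt (neg_le_abs y) h1
  have hy2 : y < z := lt_of_le_of_lt (le_abs_self y) h1
  have hz0 : 0 < z := lt_of_le_of_lt (abs_nonneg y) h1
  have hx0 : x ≠ 0 := by
    intro h; rw [h] at h2; simp at h2; linarith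
  unfold sigmaK
  rw [exp_mul_two_cosh, exp_mul_two_cosh]
  rw [show x / 2 + x / 2 = x by ring, show x / 2 - x / 2 = (0:ℝ) by ring, Real.exp_zero]
  rcases hx0.lt_or_gt with hx | hx
  · -- x < 0, |x| = -x
    rw [abs_of_neg hx] at h2
    rw [Real.sign_of_neg hx]
    have e1 : Real.exp x < 1 := Real.exp_lt_one_iff.mpr hx
    have e2 : (1 : ℝ) < Real.exp (-y / 2 + z / 2) := Real.one_lt_exp_iff.mpr (by linarith)
    have e3 : Real.exp x < Real.exp (-y / 2 - z / 2) := Real.exp_lt_exp.mpr (by linarith)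
    nlinarith
  · -- 0 < x, |x| = x
    rw [abs_of_pos hx] at h2
    rw [Real.sign_of_pos hx]
    have e2 : Real.exp (-y / 2 + z / 2) < Real.exp x := Real.exp_lt_exp.mpr (by linarith)
    have e3 : Real.exp (-y / 2 - z / 2) < 1 := Real.exp_lt_one_iff.mpr (by linarith)
    nlinarith

private lemma key_integrable (k₁ k₂ : ℝ) (hk₁ : 0 < k₁) (hk₂ : 0 < k₂)
    (a b : ℝ) (ha : 0 ≤ a) (hab : a < b) (s : ℝ → ℝ) (hs : Continuous s) :
    IntervalIntegrable (fun z => s z * (Real.cosh (z / 2) - Real.cosh (a / 2)) ^ (k₁ - 1) *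
        (Real.cosh b - Real.cosh z) ^ (k₂ - 1) * Real.sinh (z / 2)) volume a b := by
  set m := (a + b) / 2 with hm
  have ham : a < m := by rw [hm]; linarith
  have hmb : m < b := by rw [hm]; linarith
  have hm0 : 0 < m := lt_of_le_of_lt ha ham
  -- base positivity facts
  have hP : ∀ z, a < z → 0 < Real.cosh (z / 2) - Real.cosh (a / 2) := by
    intro z hz
    have : Real.cosh (a/2) < Real.cosh (z/2) := by
      rw [Real.cosh_lt_cosh]
      rw [abs_of_nonneg (by linarith : (0:ℝ) ≤ a/2), abs_of_nonneg (by linarith : (0:ℝ) ≤ z/2)]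
      linarith
    linarith
  have hQ : ∀ z, 0 ≤ z → z < b → 0 < Real.cosh b - Real.cosh z := by
    intro z hz hz'
    have : Real.cosh z < Real.cosh b := by
      rw [Real.cosh_lt_cosh, abs_of_nonneg hz, abs_of_nonneg (le_of_lt (lt_of_le_of_lt hz hz'))]
      exact hz'
    linarith
  apply IntervalIntegrable.trans (b := m)
  · -- on [a, m] : singular factor is (cosh(z/2)-cosh(a/2))^(k₁-1) * sinh(z/2)/2 * k₁, a derivative
    have hderiv : ∀ z ∈ Ioo a m,
        HasDerivAt (fun z => (Real.cosh (z / 2) - Real.cosh (a / 2)) ^ k₁)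
          (Real.sinh (z/2) * (1/2) * k₁ * (Real.cosh (z / 2) - Real.cosh (a / 2)) ^ (k₁ - 1)) z := by
      intro z hz
      have h1 : HasDerivAt (fun z : ℝ => Real.cosh (z / 2) - Real.cosh (a / 2))
          (Real.sinh (z/2) * (1/2)) z := by
        have := ((Real.hasDerivAt_cosh (z/2)).comp z ((hasDerivAt_id z).div_const 2))
        simpa using this.sub_const (Real.cosh (a / 2))
      exact h1.rpow_const (Or.inl (ne_of_gt (hP z hz.1)))
    have hint : IntervalIntegrable
        (fun z => Real.sinh (z/2) * (1/2) * k₁ * (Real.cosh (z / 2) - Real.cosh (a / 2)) ^ (k₁ - 1))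
        volume a m := by
      apply intervalIntegrable_deriv_of_nonneg (g := fun z => (Real.cosh (z / 2) - Real.cosh (a / 2)) ^ k₁)
      · apply ContinuousOn.rpow_const
        · fun_prop
        · intro z _; exact Or.inr hk₁.le
      · rwa [min_eq_left ham.le, max_eq_right ham.le]
      · rw [min_eq_left ham.le, max_eq_right ham.le]
        intro z hz
        have h0 : 0 ≤ Real.sinh (z/2) := by
          have : Real.sinh 0 ≤ Real.sinh (z/2) := Real.sinh_le_sinh.mpr (by linarith [hz.1, ha])
          simpa using this
        have := Real.rpow_nonneg (hP z hz.1).le (k₁ - 1)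
        positivity
    have := hint.continuousOn_mul
      (g := fun z => s z * (Real.cosh b - Real.cosh z) ^ (k₂ - 1) * (2 / k₁)) ?_
    · refine this.congr (fun z _ => ?_)
      have hk : k₁ ≠ 0 := ne_of_gt hk₁
      field_simp
    · apply ContinuousOn.mul _ continuousOn_const
      apply ContinuousOn.mul hs.continuousOn
      apply ContinuousOn.rpow_const
      · fun_prop
      · intro z hz
        rw [uIcc_of_le ham.le] at hz
        refine Or.inl (ne_of_gt (hQ z (le_trans ha hz.1) (lt_of_le_of_lt hz.2 hmb)))
  · -- on [m, b]
    have hderiv : ∀ z ∈ Ioo m b,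
        HasDerivAt (fun z => -(Real.cosh b - Real.cosh z) ^ k₂)
          (Real.sinh z * k₂ * (Real.cosh b - Real.cosh z) ^ (k₂ - 1)) z := by
      intro z hz
      have h1 : HasDerivAt (fun z : ℝ => Real.cosh b - Real.cosh z) (-Real.sinh z) z := by
        simpa using (Real.hasDerivAt_cosh z).const_sub (Real.cosh b)
      have := (h1.rpow_const (p := k₂) (Or.inl (ne_of_gt (hQ z (le_of_lt (lt_of_le_of_lt hm0.le hz.1)) hz.2)))).neg
      rw [show Real.sinh z * k₂ * (Real.cosh b - Real.cosh z) ^ (k₂ - 1) = -(-Real.sinh z * k₂ * (Real.cosh b - Real.cosh z) ^ (k₂ - 1)) by ring]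
      exact this
    have hint : IntervalIntegrable
        (fun z => Real.sinh z * k₂ * (Real.cosh b - Real.cosh z) ^ (k₂ - 1)) volume m b := by
      apply intervalIntegrable_deriv_of_nonneg (g := fun z => -(Real.cosh b - Real.cosh z) ^ k₂)
      · apply ContinuousOn.neg
        apply ContinuousOn.rpow_const
        · fun_prop
        · intro z _; exact Or.inr hk₂.le
      · rwa [min_eq_left hmb.le, max_eq_right hmb.le]
      · rw [min_eq_left hmb.le, max_eq_right hmb.le]
        intro z hz
        have h0 : 0 ≤ Real.sinh z := by
          have : Real.sinh 0 ≤ Real.sinh z := Real.sinh_le_sinh.mpr (by linarith [hz.1])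
          simpa using this
        have := Real.rpow_nonneg (hQ z (by linarith [hz.1]) hz.2).le (k₂ - 1)
        positivity
    have := hint.continuousOn_mul
      (g := fun z => s z * (Real.cosh (z / 2) - Real.cosh (a / 2)) ^ (k₁ - 1) /
        (2 * Real.cosh (z/2)) / k₂) ?_
    · refine this.congr (fun z _ => ?_)
      have hk : k₂ ≠ 0 := ne_of_gt hk₂
      have hc : Real.cosh (z/2) ≠ 0 := ne_of_gt (Real.cosh_pos _)
      rw [sinh_half_identity z]
      field_simp
    · apply ContinuousOn.div _ _ (fun z _ => ne_of_gt hk₂)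
      · apply ContinuousOn.div
        · apply ContinuousOn.mul hs.continuousOn
          apply ContinuousOn.rpow_const
          · fun_prop
          · intro z hz
            rw [uIcc_of_le hmb.le] at hz
            exact Or.inl (ne_of_gt (hP z (lt_of_lt_of_le ham hz.1)))
        · fun_prop
        · intro z _; positivity
      · exact continuousOn_const

end Aux

theorem stmt2 (k₁ k₂ : ℝ) (hk₁ : 0 < k₁) (hk₂ : 0 < k₂)
    (x y : ℝ) (hxy : |y| < |x|) :
    0 < K k₁ k₂ x y := by
  have hx0 : x ≠ 0 := by
    intro h
    rw [h, abs_zero] at hxy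
    exact absurd hxy (abs_nonneg y).not_gt
  have hc : 0 < c k₁ k₂ / 4 := by
    unfold c
    have g1 := Real.Gamma_pos_of_pos (show (0:ℝ) < k₁ + k₂ + 1/2 by linarith)
    have g2 := Real.Gamma_pos_of_pos hk₁
    have g3 := Real.Gamma_pos_of_pos hk₂
    have hp := Real.sqrt_pos.mpr Real.pi_pos
    have h2 : (0:ℝ) < (2:ℝ) ^ (3 * k₁ + 3 * k₂) := Real.rpow_pos_of_pos two_pos _
    positivity
  have hsne : ∀ t : ℝ, t ≠ 0 → Real.sinh t ≠ 0 := by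
    intro t ht
    rcases ht.lt_or_gt with h | h
    · exact ne_of_lt (by simpa using Real.sinh_lt_sinh.mpr h)
    · exact ne_of_gt (by simpa using Real.sinh_lt_sinh.mpr h)
  have hA : 0 < (A k₁ k₂ x)⁻¹ := by
    rw [inv_pos]
    unfold A
    have h1 : (0:ℝ) < |2 * Real.sinh (x / 2)| := by
      rw [abs_pos]
      exact mul_ne_zero two_ne_zero (hsne _ (by simpa using hx0))
    have h2 : (0:ℝ) < |2 * Real.sinh x| := by
      rw [abs_pos]
      exact mul_ne_zero two_ne_zero (hsne _ hx0)
    exact mul_pos (Real.rpow_pos_of_pos h1 _) (Real.rpow_pos_of_pos h2 _)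
  have hcy : Real.cosh (y / 2) = Real.cosh (|y| / 2) := by
    rw [show |y| / 2 = |y / 2| by rw [abs_div, abs_two], Real.cosh_abs]
  have hcx : Real.cosh x = Real.cosh |x| := (Real.cosh_abs x).symm
  have hI : 0 < ∫ z in |y|..|x|,
      sigmaK x y z * (Real.cosh (z / 2) - Real.cosh (y / 2)) ^ (k₁ - 1) *
        (Real.cosh x - Real.cosh z) ^ (k₂ - 1) * Real.sinh (z / 2) := by
    simp only [hcy, hcx]
    apply intervalIntegral_pos_of_pos_on
    · apply key_integrable k₁ k₂ hk₁ hk₂ _ _ (abs_nonneg y) hxy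
      unfold sigmaK
      fun_prop
    · intro z hz
      have hz1 : |y| < z := hz.1
      have hz2 : z < |x| := hz.2
      have hz0 : 0 < z := lt_of_le_of_lt (abs_nonneg y) hz1
      have hP : 0 < Real.cosh (z / 2) - Real.cosh (|y| / 2) := by
        have : Real.cosh (|y| / 2) < Real.cosh (z / 2) := by
          rw [Real.cosh_lt_cosh,
            abs_of_nonneg (by positivity : (0:ℝ) ≤ |y| / 2),
            abs_of_nonneg (by linarith : (0:ℝ) ≤ z / 2)]
          linarith
        linarith
      have hQ : 0 < Real.cosh |x| - Real.cosh z := by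
        have : Real.cosh z < Real.cosh |x| := by
          rw [Real.cosh_lt_cosh, abs_of_nonneg hz0.le, abs_abs]
          exact hz2
        linarith
      have hsp : 0 < Real.sinh (z / 2) := by
        have : Real.sinh 0 < Real.sinh (z / 2) := Real.sinh_lt_sinh.mpr (by linarith)
        simpa using this
      exact mul_pos (mul_pos (mul_pos (sigmaK_pos hz1 hz2)
        (Real.rpow_pos_of_pos hP _)) (Real.rpow_pos_of_pos hQ _)) hsp
    · exact hxy
  exact mul_pos (mul_pos hc hA) hI
end

section
/- Let k₁ > 0 and k₂ > 0 be real parameters and let x ≠ 0 be a real number. If f : ℝ → ℝ is a measurable function with f(y) ≥ 0 for all y, then V f(x) := ∫_{−|x|}^{|x|} K(x,y) f(y) dy ≥ 0. Moreover, if f is continuous and f(y₀) > 0 for some y₀ with |y₀| < |x|, and f is integrable against K(x,·) on (−|x|,|x|), then V f(x) > 0. -/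
open Real MeasureTheory intervalIntegral
open Set

section helpers

lemma c_pos {k₁ k₂ : ℝ} (hk₁ : 0 < k₁) (hk₂ : 0 < k₂) : 0 < c k₁ k₂ := by
  unfold c
  apply div_pos
  · exact mul_pos (Real.rpow_pos_of_pos two_pos _)
      (Real.Gamma_pos_of_pos (by linarith))
  · exact mul_pos (mul_pos (Real.sqrt_pos.mpr Real.pi_pos)
      (Real.Gamma_pos_of_pos hk₁)) (Real.Gamma_pos_of_pos hk₂)

lemma A_pos {k₁ k₂ x : ℝ} (hx : x ≠ 0) : 0 < A k₁ k₂ x := by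
  unfold A
  have h1 : (0:ℝ) < |2 * Real.sinh (x / 2)| :=
    abs_pos.mpr (mul_ne_zero two_ne_zero (Real.sinh_ne_zero.mpr
      (div_ne_zero hx two_ne_zero)))
  have h2 : (0:ℝ) < |2 * Real.sinh x| :=
    abs_pos.mpr (mul_ne_zero two_ne_zero (Real.sinh_ne_zero.mpr hx))
  exact mul_pos (Real.rpow_pos_of_pos h1 _) (Real.rpow_pos_of_pos h2 _)

lemma cosh_half_mono {u v : ℝ} (h1 : |u| ≤ v) :
    Real.cosh (u / 2) ≤ Real.cosh (v / 2) := by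
  have h0 : 0 ≤ v := (abs_nonneg u).trans h1
  apply Real.cosh_le_cosh.mpr
  rw [abs_div, abs_div, abs_two]
  rw [abs_of_nonneg h0]
  linarith

lemma rpow_bound {lo hi u p : ℝ} (hlo : 0 < lo) (h1 : lo ≤ u) (h2 : u ≤ hi) :
    u ^ p ≤ lo ^ p + hi ^ p := by
  rcases le_or_gt 0 p with hp | hp
  · have h3 := Real.rpow_le_rpow (hlo.le.trans h1) h2 hp
    have h4 : 0 ≤ lo ^ p := Real.rpow_nonneg hlo.le p
    linarith
  · have h3 := Real.rpow_le_rpow_of_nonpos hlo h1 hp.le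
    have h4 : 0 ≤ hi ^ p := Real.rpow_nonneg (hlo.le.trans (h1.trans h2)) p
    linarith

end helpers

lemma cosh_half_strict {u v : ℝ} (h0 : 0 ≤ u) (h1 : u < v) :
    Real.cosh (u / 2) < Real.cosh (v / 2) := by
  apply Real.cosh_lt_cosh.mpr
  rw [abs_div, abs_div, abs_two, abs_of_nonneg h0, abs_of_nonneg (h0.trans h1.le)]
  linarith

lemma abs_sign_le (x : ℝ) : |Real.sign x| ≤ 1 := by
  rcases Real.sign_apply_eq x with h | h | h <;> simp [h]

lemma inner_integrable {k₁ k₂ x y : ℝ} (hk₁ : 0 < k₁) (hk₂ : 0 < k₂)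
    (hx : x ≠ 0) (hy : |y| < |x|) :
    IntervalIntegrable (fun z => sigmaK x y z *
      (Real.cosh (z / 2) - Real.cosh (y / 2)) ^ (k₁ - 1) *
      (Real.cosh x - Real.cosh z) ^ (k₂ - 1) * Real.sinh (z / 2)) volume |y| |x| := by
  set a := |y| with ha
  set b := |x| with hb
  set m := (a + b) / 2 with hm
  have ha0 : 0 ≤ a := abs_nonneg y
  have hab : a < b := hy
  have ham : a < m := by rw [hm]; linarith
  have hmb : m < b := by rw [hm]; linarith
  have hm0 : 0 ≤ m := by linarith
  have hcoshy : Real.cosh (y / 2) = Real.cosh (a / 2) := by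
    rw [ha, ← Real.cosh_abs (y/2), abs_div, abs_two]
  have hcoshx : Real.cosh x = Real.cosh b := by rw [hb, Real.cosh_abs]
  have hc2 : Continuous (fun z : ℝ => Real.cosh (z/2)) :=
    Real.continuous_cosh.comp (continuous_id.div_const 2)
  have hσc : Continuous (fun z => sigmaK x y z) := by
    unfold sigmaK
    exact continuous_const.mul (continuous_const.sub
      (continuous_const.mul (continuous_const.mul hc2)))
  -- sigma bound
  set Cσ : ℝ := |Real.exp (x / 2) * (2 * Real.cosh (x / 2))| +
      Real.exp (a / 2) * (2 * Real.cosh (b / 2)) with hCσdef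
  have hCσ0 : 0 ≤ Cσ := by rw [hCσdef]; positivity
  have hσ : ∀ z ∈ Set.Icc a b, |sigmaK x y z| ≤ Cσ := by
    intro z hz
    have h1 : |Real.sign x| ≤ 1 := abs_sign_le x
    have h2 : Real.exp (-y/2) ≤ Real.exp (a/2) := Real.exp_le_exp.mpr (by
      have := neg_le_abs y; rw [ha]; linarith)
    have h3 : Real.cosh (z/2) ≤ Real.cosh (b/2) := cosh_half_mono
      (by rw [abs_of_nonneg (ha0.trans hz.1)]; exact hz.2)
    have h4 : (0:ℝ) < Real.cosh (z/2) := Real.cosh_pos _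
    have h5 : (0:ℝ) < Real.exp (-y/2) := Real.exp_pos _
    have key : |Real.exp (x / 2) * (2 * Real.cosh (x / 2)) -
        Real.exp (-y / 2) * (2 * Real.cosh (z / 2))| ≤ Cσ := by
      refine (abs_sub _ _).trans ?_
      rw [hCσdef]
      have h6 : |Real.exp (-y / 2) * (2 * Real.cosh (z / 2))| =
          Real.exp (-y / 2) * (2 * Real.cosh (z / 2)) :=
        abs_of_pos (by positivity)
      rw [h6]
      have h7 : Real.exp (-y / 2) * (2 * Real.cosh (z / 2)) ≤
          Real.exp (a / 2) * (2 * Real.cosh (b / 2)) := by nlinarith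
      linarith
    calc |sigmaK x y z| = |Real.sign x| * _ := by rw [sigmaK, abs_mul]
      _ ≤ 1 * _ := mul_le_mul_of_nonneg_right h1 (abs_nonneg _)
      _ = _ := one_mul _
      _ ≤ Cσ := key
  -- bounds for q = cosh b - cosh z on [a, m]
  have hqlo : (0:ℝ) < Real.cosh b - Real.cosh m := by
    have : Real.cosh m < Real.cosh b := Real.cosh_lt_cosh.mpr
      (by rw [abs_of_nonneg hm0, abs_of_nonneg (ha0.trans hab.le)]; exact hmb)
    linarith
  have hcab : Real.cosh a ≤ Real.cosh b := Real.cosh_le_cosh.mpr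
    (by rw [abs_of_nonneg ha0, abs_of_nonneg (ha0.trans hab.le)]; exact hab.le)
  set Cq : ℝ := (Real.cosh b - Real.cosh m) ^ (k₂ - 1) +
      (Real.cosh b - Real.cosh a) ^ (k₂ - 1) with hCqdef
  have hCq0 : 0 ≤ Cq := add_nonneg (Real.rpow_nonneg hqlo.le _)
    (Real.rpow_nonneg (by linarith) _)
  have hqbound : ∀ z ∈ Set.Icc a m, (Real.cosh b - Real.cosh z) ^ (k₂ - 1) ≤ Cq := by
    intro z hz
    have hz0 : 0 ≤ z := ha0.trans hz.1
    have h1 : Real.cosh z ≤ Real.cosh m := Real.cosh_le_cosh.mpr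
      (by rw [abs_of_nonneg hz0, abs_of_nonneg hm0]; exact hz.2)
    have h2 : Real.cosh a ≤ Real.cosh z := Real.cosh_le_cosh.mpr
      (by rw [abs_of_nonneg ha0, abs_of_nonneg hz0]; exact hz.1)
    exact rpow_bound hqlo (by linarith) (by linarith)
  -- bounds for P = cosh(z/2) - cosh(a/2) on [m, b]
  have hplo : (0:ℝ) < Real.cosh (m/2) - Real.cosh (a/2) := by
    have := cosh_half_strict ha0 ham; linarith
  set Cp : ℝ := (Real.cosh (m/2) - Real.cosh (a/2)) ^ (k₁ - 1) +
      (Real.cosh (b/2) - Real.cosh (a/2)) ^ (k₁ - 1) with hCpdef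
  have hCp0 : 0 ≤ Cp := add_nonneg (Real.rpow_nonneg hplo.le _)
    (Real.rpow_nonneg (by have := cosh_half_strict ha0 hab; linarith) _)
  have hpbound : ∀ z ∈ Set.Icc m b,
      (Real.cosh (z/2) - Real.cosh (a/2)) ^ (k₁ - 1) ≤ Cp := by
    intro z hz
    have hz0 : 0 ≤ z := hm0.trans hz.1
    have h1 : Real.cosh (m/2) ≤ Real.cosh (z/2) := cosh_half_mono
      (by rw [abs_of_nonneg hm0]; exact hz.1)
    have h2 : Real.cosh (z/2) ≤ Real.cosh (b/2) := cosh_half_mono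
      (by rw [abs_of_nonneg hz0]; exact hz.2)
    exact rpow_bound hplo (by linarith) (by linarith)
  -- piece 1 : on [a, m]
  have piece1 : IntervalIntegrable (fun z => sigmaK x y z *
      (Real.cosh (z / 2) - Real.cosh (y / 2)) ^ (k₁ - 1) *
      (Real.cosh x - Real.cosh z) ^ (k₂ - 1) * Real.sinh (z / 2)) volume a m := by
    set C1 : ℝ := Cσ * Cq with hC1def
    have hC10 : 0 ≤ C1 := mul_nonneg hCσ0 hCq0
    have hD1int : IntervalIntegrable (fun z => C1 *
        ((Real.cosh (z / 2) - Real.cosh (a / 2)) ^ (k₁ - 1) * Real.sinh (z / 2)))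
        volume a m := by
      apply intervalIntegrable_deriv_of_nonneg
        (g := fun w => C1 * (2 / k₁) * ((Real.cosh (w/2) - Real.cosh (a/2)) ^ k₁))
      · apply ContinuousOn.mul continuousOn_const
        apply ContinuousOn.rpow_const ((hc2.sub continuous_const).continuousOn)
        intro z _; exact Or.inr hk₁.le
      · intro z hz
        rw [min_eq_left ham.le, max_eq_right ham.le] at hz
        have hPz : (0:ℝ) < Real.cosh (z/2) - Real.cosh (a/2) := by
          have := cosh_half_strict ha0 hz.1; linarith
        have hP : HasDerivAt (fun w => Real.cosh (w/2) - Real.cosh (a/2))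
            (Real.sinh (z/2) * (1/2)) z := by
          have h1 : HasDerivAt (fun w : ℝ => w / 2) (1/2) z := by
            simpa using (hasDerivAt_id z).div_const 2
          exact ((Real.hasDerivAt_cosh (z/2)).comp z h1).sub_const _
        have hG := ((Real.hasDerivAt_rpow_const (p := k₁)
          (Or.inl hPz.ne')).comp z hP).const_mul (C1 * (2 / k₁))
        refine hG.congr_deriv ?_
        field_simp
      · intro z hz
        rw [min_eq_left ham.le, max_eq_right ham.le] at hz
        have hz0 : 0 ≤ z := ha0.trans hz.1.le
        exact mul_nonneg hC10 (mul_nonneg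
          (Real.rpow_nonneg (by have := cosh_half_strict ha0 hz.1; linarith) _)
          (Real.sinh_nonneg_iff.mpr (by linarith)))
    apply hD1int.mono_fun
    · apply ContinuousOn.aestronglyMeasurable _ measurableSet_uIoc
      rw [uIoc_of_le ham.le]
      apply ContinuousOn.mul
      apply ContinuousOn.mul
      apply ContinuousOn.mul hσc.continuousOn
      · apply ContinuousOn.rpow_const ((hc2.sub continuous_const).continuousOn)
        intro z hz
        left
        rw [hcoshy]
        have := cosh_half_strict ha0 hz.1; exact (by simp only [Pi.sub_apply]; linarith : (0:ℝ) < _).ne'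
      · apply ContinuousOn.rpow_const
          ((continuous_const.sub Real.continuous_cosh).continuousOn)
        intro z hz
        left
        rw [hcoshx]
        have h1 : Real.cosh z ≤ Real.cosh m := Real.cosh_le_cosh.mpr
          (by rw [abs_of_nonneg (ha0.trans hz.1.le), abs_of_nonneg hm0]; exact hz.2)
        exact (by simp only [Pi.sub_apply]; linarith : (0:ℝ) < _).ne'
      · exact (Real.continuous_sinh.comp (continuous_id.div_const 2)).continuousOn
    · rw [uIoc_of_le ham.le]
      refine (ae_restrict_iff' measurableSet_Ioc).2 (Filter.Eventually.of_forall ?_)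
      intro z hz
      have hz0 : 0 ≤ z := ha0.trans hz.1.le
      have hPk0 : (0:ℝ) ≤ (Real.cosh (z / 2) - Real.cosh (y / 2)) ^ (k₁ - 1) := by
        apply Real.rpow_nonneg
        rw [hcoshy]
        have := cosh_half_strict ha0 hz.1; linarith
      have hqk0 : (0:ℝ) ≤ (Real.cosh x - Real.cosh z) ^ (k₂ - 1) := by
        apply Real.rpow_nonneg
        rw [hcoshx]
        have h1 : Real.cosh z ≤ Real.cosh m := Real.cosh_le_cosh.mpr
          (by rw [abs_of_nonneg hz0, abs_of_nonneg hm0]; exact hz.2)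
        linarith
      have hs0 : (0:ℝ) ≤ Real.sinh (z/2) := Real.sinh_nonneg_iff.mpr (by linarith)
      have hσz := hσ z ⟨hz.1.le, hz.2.trans hmb.le⟩
      have hqz : (Real.cosh x - Real.cosh z) ^ (k₂ - 1) ≤ Cq := by
        rw [hcoshx]; exact hqbound z ⟨hz.1.le, hz.2⟩
      simp only [Real.norm_eq_abs]
      rw [abs_mul, abs_mul, abs_mul, abs_of_nonneg hPk0, abs_of_nonneg hqk0,
        abs_of_nonneg hs0]
      have hstep : |sigmaK x y z| * (Real.cosh (z / 2) - Real.cosh (y / 2)) ^ (k₁ - 1) *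
          (Real.cosh x - Real.cosh z) ^ (k₂ - 1) * Real.sinh (z/2) ≤
          Cσ * (Real.cosh (z / 2) - Real.cosh (y / 2)) ^ (k₁ - 1) * Cq *
          Real.sinh (z/2) := by
        apply mul_le_mul_of_nonneg_right _ hs0
        apply mul_le_mul (mul_le_mul hσz le_rfl hPk0 hCσ0) hqz hqk0
          (mul_nonneg hCσ0 hPk0)
      have heq : C1 * ((Real.cosh (z / 2) - Real.cosh (a / 2)) ^ (k₁ - 1) *
          Real.sinh (z/2)) = Cσ * (Real.cosh (z / 2) - Real.cosh (y / 2)) ^ (k₁ - 1) *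
          Cq * Real.sinh (z/2) := by
        rw [hcoshy, hC1def]; ring
      have final : Cσ * (Real.cosh (z / 2) - Real.cosh (y / 2)) ^ (k₁ - 1) * Cq *
          Real.sinh (z/2) ≤ |C1 * ((Real.cosh (z / 2) - Real.cosh (a / 2)) ^ (k₁ - 1) *
          Real.sinh (z/2))| := by rw [← heq] at *; exact le_abs_self _
      exact le_trans hstep final
  -- piece 2 : on [m, b]
  have piece2 : IntervalIntegrable (fun z => sigmaK x y z *
      (Real.cosh (z / 2) - Real.cosh (y / 2)) ^ (k₁ - 1) *
      (Real.cosh x - Real.cosh z) ^ (k₂ - 1) * Real.sinh (z / 2)) volume m b := by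
    set C2 : ℝ := Cσ * Cp with hC2def
    have hC20 : 0 ≤ C2 := mul_nonneg hCσ0 hCp0
    have hD2int : IntervalIntegrable (fun z => C2 *
        ((Real.cosh b - Real.cosh z) ^ (k₂ - 1) * Real.sinh z)) volume m b := by
      apply intervalIntegrable_deriv_of_nonneg
        (g := fun w => -(C2 / k₂) * ((Real.cosh b - Real.cosh w) ^ k₂))
      · apply ContinuousOn.mul continuousOn_const
        apply ContinuousOn.rpow_const
          ((continuous_const.sub Real.continuous_cosh).continuousOn)
        intro z _; exact Or.inr hk₂.le
      · intro z hz
        rw [min_eq_left hmb.le, max_eq_right hmb.le] at hz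
        have hQz : (0:ℝ) < Real.cosh b - Real.cosh z := by
          have : Real.cosh z < Real.cosh b := Real.cosh_lt_cosh.mpr
            (by rw [abs_of_nonneg (hm0.trans hz.1.le),
                abs_of_nonneg (ha0.trans hab.le)]; exact hz.2)
          linarith
        have hQ : HasDerivAt (fun w => Real.cosh b - Real.cosh w) (-Real.sinh z) z :=
          (Real.hasDerivAt_cosh z).const_sub _
        have hG := ((Real.hasDerivAt_rpow_const (p := k₂)
          (Or.inl hQz.ne')).comp z hQ).const_mul (-(C2 / k₂))
        refine hG.congr_deriv ?_
        field_simp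
      · intro z hz
        rw [min_eq_left hmb.le, max_eq_right hmb.le] at hz
        have hQz : (0:ℝ) ≤ Real.cosh b - Real.cosh z := by
          have : Real.cosh z ≤ Real.cosh b := Real.cosh_le_cosh.mpr
            (by rw [abs_of_nonneg (hm0.trans hz.1.le),
                abs_of_nonneg (ha0.trans hab.le)]; exact hz.2.le)
          linarith
        exact mul_nonneg hC20 (mul_nonneg (Real.rpow_nonneg hQz _)
          (Real.sinh_nonneg_iff.mpr (by linarith [hz.1])))
    have hres : volume.restrict (Set.Ioc m b) = volume.restrict (Set.Ioo m b) :=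
      (Measure.restrict_congr_set Ioo_ae_eq_Ioc).symm
    apply hD2int.mono_fun
    · rw [uIoc_of_le hmb.le, hres]
      apply ContinuousOn.aestronglyMeasurable _ measurableSet_Ioo
      apply ContinuousOn.mul
      apply ContinuousOn.mul
      apply ContinuousOn.mul hσc.continuousOn
      · apply ContinuousOn.rpow_const ((hc2.sub continuous_const).continuousOn)
        intro z hz
        left
        rw [hcoshy]
        have := cosh_half_strict ha0 (ham.trans hz.1); exact (by simp only [Pi.sub_apply]; linarith : (0:ℝ) < _).ne'
      · apply ContinuousOn.rpow_const
          ((continuous_const.sub Real.continuous_cosh).continuousOn)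
        intro z hz
        left
        rw [hcoshx]
        have h1 : Real.cosh z < Real.cosh b := Real.cosh_lt_cosh.mpr
          (by rw [abs_of_nonneg (hm0.trans hz.1.le),
              abs_of_nonneg (ha0.trans hab.le)]; exact hz.2)
        exact (by simp only [Pi.sub_apply]; linarith : (0:ℝ) < _).ne'
      · exact (Real.continuous_sinh.comp (continuous_id.div_const 2)).continuousOn
    · rw [uIoc_of_le hmb.le, hres]
      refine (ae_restrict_iff' measurableSet_Ioo).2 (Filter.Eventually.of_forall ?_)
      intro z hz
      have hz0 : 0 ≤ z := hm0.trans hz.1.le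
      have hPk0 : (0:ℝ) ≤ (Real.cosh (z / 2) - Real.cosh (y / 2)) ^ (k₁ - 1) := by
        apply Real.rpow_nonneg
        rw [hcoshy]
        have := cosh_half_strict ha0 (ham.trans hz.1); linarith
      have hqk0 : (0:ℝ) ≤ (Real.cosh x - Real.cosh z) ^ (k₂ - 1) := by
        apply Real.rpow_nonneg
        rw [hcoshx]
        have h1 : Real.cosh z ≤ Real.cosh b := Real.cosh_le_cosh.mpr
          (by rw [abs_of_nonneg hz0, abs_of_nonneg (ha0.trans hab.le)]; exact hz.2.le)
        linarith
      have hs0 : (0:ℝ) ≤ Real.sinh (z/2) := Real.sinh_nonneg_iff.mpr (by linarith)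
      have hsz : Real.sinh (z/2) ≤ Real.sinh z := Real.sinh_le_sinh.mpr (by linarith)
      have hσz := hσ z ⟨(ham.trans hz.1).le, hz.2.le⟩
      have hpz : (Real.cosh (z / 2) - Real.cosh (y / 2)) ^ (k₁ - 1) ≤ Cp := by
        rw [hcoshy]; exact hpbound z ⟨hz.1.le, hz.2.le⟩
      simp only [Real.norm_eq_abs]
      have hstep : |sigmaK x y z| * (Real.cosh (z / 2) - Real.cosh (y / 2)) ^ (k₁ - 1) *
          (Real.cosh x - Real.cosh z) ^ (k₂ - 1) * Real.sinh (z/2) ≤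
          Cσ * Cp * (Real.cosh x - Real.cosh z) ^ (k₂ - 1) * Real.sinh z := by
        apply mul_le_mul _ hsz hs0 (mul_nonneg (mul_nonneg hCσ0 hCp0) hqk0)
        exact mul_le_mul_of_nonneg_right (mul_le_mul hσz hpz hPk0 hCσ0) hqk0
      have heq : C2 * ((Real.cosh b - Real.cosh z) ^ (k₂ - 1) * Real.sinh z) =
          Cσ * Cp * (Real.cosh x - Real.cosh z) ^ (k₂ - 1) * Real.sinh z := by
        rw [hC2def, hcoshx]; ring
      have final : Cσ * Cp * (Real.cosh x - Real.cosh z) ^ (k₂ - 1) * Real.sinh z ≤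
          |C2 * ((Real.cosh b - Real.cosh z) ^ (k₂ - 1) * Real.sinh z)| := by
        rw [← heq] at *; exact le_abs_self _
      refine le_trans ?_ final
      rw [abs_mul, abs_mul, abs_mul, abs_of_nonneg hPk0, abs_of_nonneg hqk0,
        abs_of_nonneg hs0]
      exact hstep
  exact piece1.trans piece2

lemma sigma_nonneg {x y z : ℝ} (hx : x ≠ 0) (h1 : |y| ≤ z) (h2 : z ≤ |x|) :
    0 ≤ sigmaK x y z := by
  have hy1 : -y ≤ |y| := neg_le_abs y
  have hy2 : y ≤ |y| := le_abs_self y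
  have hz0 : 0 ≤ z := (abs_nonneg y).trans h1
  have e1 : Real.exp (-y/2) * Real.exp (z/2) = Real.exp ((z-y)/2) := by
    rw [← Real.exp_add]; congr 1; ring
  have e2 : Real.exp (-y/2) * Real.exp (-(z/2)) = Real.exp ((-z-y)/2) := by
    rw [← Real.exp_add]; congr 1; ring
  have e3 : Real.exp (x/2) * Real.exp (x/2) = Real.exp x := by
    rw [← Real.exp_add]; congr 1; ring
  have e4 : Real.exp (x/2) * Real.exp (-(x/2)) = 1 := by
    rw [← Real.exp_add]; simp
  rcases hx.lt_or_gt with hneg | hpos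
  · have hb : |x| = -x := abs_of_neg hneg
    rw [hb] at h2
    have i1 : 1 ≤ Real.exp ((z-y)/2) := Real.one_le_exp (by linarith)
    have i2 : Real.exp x ≤ Real.exp ((-z-y)/2) := Real.exp_le_exp.mpr (by linarith)
    unfold sigmaK
    rw [Real.sign_of_neg hneg, Real.cosh_eq, Real.cosh_eq]
    nlinarith [e1, e2, e3, e4, i1, i2]
  · have hb : |x| = x := abs_of_pos hpos
    rw [hb] at h2
    have i1 : Real.exp ((z-y)/2) ≤ Real.exp x := Real.exp_le_exp.mpr (by linarith)
    have i2 : Real.exp ((-z-y)/2) ≤ 1 := Real.exp_le_one_iff.mpr (by linarith)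
    unfold sigmaK
    rw [Real.sign_of_pos hpos, Real.cosh_eq, Real.cosh_eq]
    nlinarith [e1, e2, e3, e4, i1, i2]

lemma sigma_pos {x y z : ℝ} (hx : x ≠ 0) (h1 : |y| < z) (h2 : z < |x|) :
    0 < sigmaK x y z := by
  have hy1 : -y ≤ |y| := neg_le_abs y
  have hy2 : y ≤ |y| := le_abs_self y
  have hz0 : 0 ≤ z := (abs_nonneg y).trans h1.le
  have e1 : Real.exp (-y/2) * Real.exp (z/2) = Real.exp ((z-y)/2) := by
    rw [← Real.exp_add]; congr 1; ring
  have e2 : Real.exp (-y/2) * Real.exp (-(z/2)) = Real.exp ((-z-y)/2) := by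
    rw [← Real.exp_add]; congr 1; ring
  have e3 : Real.exp (x/2) * Real.exp (x/2) = Real.exp x := by
    rw [← Real.exp_add]; congr 1; ring
  have e4 : Real.exp (x/2) * Real.exp (-(x/2)) = 1 := by
    rw [← Real.exp_add]; simp
  rcases hx.lt_or_gt with hneg | hpos
  · have hb : |x| = -x := abs_of_neg hneg
    rw [hb] at h2
    have i1 : 1 < Real.exp ((z-y)/2) := Real.one_lt_exp_iff.mpr (by linarith)
    have i2 : Real.exp x ≤ Real.exp ((-z-y)/2) := Real.exp_le_exp.mpr (by linarith)
    unfold sigmaK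
    rw [Real.sign_of_neg hneg, Real.cosh_eq, Real.cosh_eq]
    nlinarith [e1, e2, e3, e4, i1, i2]
  · have hb : |x| = x := abs_of_pos hpos
    rw [hb] at h2
    have i1 : Real.exp ((z-y)/2) < Real.exp x := Real.exp_lt_exp.mpr (by linarith)
    have i2 : Real.exp ((-z-y)/2) < 1 := Real.exp_lt_one_iff.mpr (by linarith)
    unfold sigmaK
    rw [Real.sign_of_pos hpos, Real.cosh_eq, Real.cosh_eq]
    nlinarith [e1, e2, e3, e4, i1, i2]


lemma inner_nonneg' {k₁ k₂ x y z : ℝ} (hx : x ≠ 0) (h1 : |y| ≤ z) (h2 : z ≤ |x|) :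
    0 ≤ sigmaK x y z * (Real.cosh (z / 2) - Real.cosh (y / 2)) ^ (k₁ - 1) *
      (Real.cosh x - Real.cosh z) ^ (k₂ - 1) * Real.sinh (z / 2) := by
  have hz0 : 0 ≤ z := (abs_nonneg y).trans h1
  have hP : Real.cosh (y/2) ≤ Real.cosh (z/2) := cosh_half_mono h1
  have hQ : Real.cosh z ≤ Real.cosh x := by
    rw [← Real.cosh_abs x]
    exact Real.cosh_le_cosh.mpr (by rw [abs_of_nonneg hz0, abs_abs]; exact h2)
  exact mul_nonneg (mul_nonneg (mul_nonneg (sigma_nonneg hx h1 h2)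
    (Real.rpow_nonneg (by linarith) _)) (Real.rpow_nonneg (by linarith) _))
    (Real.sinh_nonneg_iff.mpr (by linarith))

lemma inner_pos {k₁ k₂ x y : ℝ} (hk₁ : 0 < k₁) (hk₂ : 0 < k₂)
    (hx : x ≠ 0) (hy : |y| < |x|) :
    0 < ∫ z in |y|..|x|, sigmaK x y z *
      (Real.cosh (z / 2) - Real.cosh (y / 2)) ^ (k₁ - 1) *
      (Real.cosh x - Real.cosh z) ^ (k₂ - 1) * Real.sinh (z / 2) := by
  apply intervalIntegral_pos_of_pos_on (inner_integrable hk₁ hk₂ hx hy) _ hy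
  intro z hz
  have ha0 : (0:ℝ) ≤ |y| := abs_nonneg y
  have hz0 : 0 < z := lt_of_le_of_lt ha0 hz.1
  have hP : Real.cosh (y/2) < Real.cosh (z/2) := by
    rw [show Real.cosh (y/2) = Real.cosh (|y|/2) by
      rw [← Real.cosh_abs (y/2), abs_div, abs_two]]
    exact cosh_half_strict ha0 hz.1
  have hQ : Real.cosh z < Real.cosh x := by
    rw [← Real.cosh_abs x]
    exact Real.cosh_lt_cosh.mpr (by rw [abs_of_nonneg hz0.le, abs_abs]; exact hz.2)
  exact mul_pos (mul_pos (mul_pos (sigma_pos hx hz.1 hz.2)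
    (Real.rpow_pos_of_pos (by linarith) _)) (Real.rpow_pos_of_pos (by linarith) _))
    (Real.sinh_pos_iff.mpr (by linarith))

lemma K_nonneg {k₁ k₂ x y : ℝ} (hk₁ : 0 < k₁) (hk₂ : 0 < k₂) (hx : x ≠ 0)
    (hy : |y| ≤ |x|) : 0 ≤ K k₁ k₂ x y := by
  unfold K
  apply mul_nonneg (mul_nonneg (div_nonneg (c_pos hk₁ hk₂).le (by norm_num))
    (inv_nonneg.mpr (A_pos hx).le))
  exact intervalIntegral.integral_nonneg hy (fun z hz => inner_nonneg' hx hz.1 hz.2)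

lemma K_pos {k₁ k₂ x y : ℝ} (hk₁ : 0 < k₁) (hk₂ : 0 < k₂) (hx : x ≠ 0)
    (hy : |y| < |x|) : 0 < K k₁ k₂ x y := by
  unfold K
  exact mul_pos (mul_pos (div_pos (c_pos hk₁ hk₂) four_pos)
    (inv_pos.mpr (A_pos hx))) (inner_pos hk₁ hk₂ hx hy)

theorem stmt3 (k₁ k₂ : ℝ) (hk₁ : 0 < k₁) (hk₂ : 0 < k₂)
    (x : ℝ) (hx : x ≠ 0) (f : ℝ → ℝ) (hf : Measurable f)
    (hf0 : ∀ y, 0 ≤ f y) :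
    (0 ≤ ∫ y in (-|x|)..|x|, K k₁ k₂ x y * f y) ∧
    (Continuous f →
      ∀ y₀ : ℝ, |y₀| < |x| → 0 < f y₀ →
        IntervalIntegrable (fun y => K k₁ k₂ x y * f y) volume (-|x|) |x| →
        0 < ∫ y in (-|x|)..|x|, K k₁ k₂ x y * f y) := by
  have hx0 : 0 < |x| := abs_pos.mpr hx
  constructor
  · apply intervalIntegral.integral_nonneg (by linarith : -|x| ≤ |x|)
    intro y hy
    exact mul_nonneg (K_nonneg hk₁ hk₂ hx (abs_le.mpr ⟨hy.1, hy.2⟩)) (hf0 y)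
  · intro hcont y₀ hy₀ hfy₀ hInt
    have hnb : f ⁻¹' (Set.Ioi 0) ∈ nhds y₀ :=
      hcont.continuousAt (isOpen_Ioi.mem_nhds hfy₀)
    obtain ⟨ε, hε, hball⟩ := Metric.mem_nhds_iff.mp hnb
    set r : ℝ := min (ε/2) ((|x| - |y₀|)/2) with hr
    have hr0 : 0 < r := lt_min (by linarith) (by linarith)
    have hr1 : r ≤ ε/2 := min_le_left _ _
    have hr2 : r ≤ (|x| - |y₀|)/2 := min_le_right _ _
    have hy₀1 : y₀ ≤ |y₀| := le_abs_self y₀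
    have hy₀2 : -|y₀| ≤ y₀ := neg_abs_le y₀
    have hy₀0 : (0:ℝ) ≤ |y₀| := abs_nonneg y₀
    have hca : -|x| ≤ y₀ - r := by linarith
    have hbd : y₀ + r ≤ |x| := by linarith
    have hsub : Set.uIcc (y₀ - r) (y₀ + r) ⊆ Set.uIcc (-|x|) |x| := by
      rw [Set.uIcc_of_le (by linarith), Set.uIcc_of_le (by linarith)]
      exact Set.Icc_subset_Icc hca hbd
    have hI' := hInt.mono_set hsub
    have hpos : 0 < ∫ y in (y₀ - r)..(y₀ + r), K k₁ k₂ x y * f y := by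
      apply intervalIntegral_pos_of_pos_on hI' _ (by linarith)
      intro y hy
      have hfy : 0 < f y := by
        apply hball
        rw [Metric.mem_ball, Real.dist_eq]
        have h1 := hy.1; have h2 := hy.2
        exact abs_lt.mpr ⟨by linarith, by linarith⟩
      have hyx : |y| < |x| := abs_lt.mpr ⟨by linarith [hy.1], by linarith [hy.2]⟩
      exact mul_pos (K_pos hk₁ hk₂ hx hyx) hfy
    refine lt_of_lt_of_le hpos
      (intervalIntegral.integral_mono_interval hca (by linarith) hbd ?_ hInt)
    refine (ae_restrict_iff' measurableSet_Ioc).2 (Filter.Eventually.of_forall ?_)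
    intro y hy
    exact mul_nonneg (K_nonneg hk₁ hk₂ hx (abs_le.mpr ⟨hy.1.le, hy.2⟩)) (hf0 y)
end

section
/- Let k₁ > 0 and k₂ > 0 be real parameters and let y be a real number. If g : ℝ → ℝ is a measurable function with g(x) ≥ 0 for all x, then the dual intertwining operator satisfies ᵗV g(y) := ∫_{|x|>|y|} K(x,y) g(x) A(x) dx ≥ 0. -/
open Real MeasureTheory intervalIntegral

theorem stmt4 (k₁ k₂ : ℝ) (hk₁ : 0 < k₁) (hk₂ : 0 < k₂)
    (y : ℝ) (g : ℝ → ℝ) (hg : Measurable g) (hg0 : ∀ x, 0 ≤ g x) :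
    0 ≤ ∫ x in {x : ℝ | |y| < |x|}, K k₁ k₂ x y * g x * A k₁ k₂ x := by
  have hA : ∀ x, 0 ≤ A k₁ k₂ x := fun x =>
    mul_nonneg (Real.rpow_nonneg (abs_nonneg _) _) (Real.rpow_nonneg (abs_nonneg _) _)
  have hK : ∀ x, |y| < |x| → 0 ≤ K k₁ k₂ x y := by
    intro x hx
    unfold K
    apply mul_nonneg (mul_nonneg _ (inv_nonneg.mpr (hA x)))
    · -- inner integral nonneg
      apply intervalIntegral.integral_nonneg hx.le
      intro z hz
      obtain ⟨hz1, hz2⟩ := hz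
      have hz0 : 0 ≤ z := le_trans (abs_nonneg y) hz1
      have hσ : 0 ≤ sigmaK x y z := by
        unfold sigmaK
        have h1 : Real.exp (x / 2) * (2 * Real.cosh (x / 2)) = Real.exp x + 1 := by
          rw [Real.cosh_eq]
          have e1 : Real.exp (x / 2) * Real.exp (x / 2) = Real.exp x := by
            rw [← Real.exp_add]; ring_nf
          have e2 : Real.exp (x / 2) * Real.exp (-(x / 2)) = 1 := by
            rw [← Real.exp_add]; simp
          nlinarith [e1, e2]
        have h2 : Real.exp (-y / 2) * (2 * Real.cosh (z / 2)) =
            Real.exp ((z - y) / 2) + Real.exp (-(z + y) / 2) := by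
          rw [Real.cosh_eq]
          have e1 : Real.exp (-y / 2) * Real.exp (z / 2) = Real.exp ((z - y) / 2) := by
            rw [← Real.exp_add]; ring_nf
          have e2 : Real.exp (-y / 2) * Real.exp (-(z / 2)) = Real.exp (-(z + y) / 2) := by
            rw [← Real.exp_add]; ring_nf
          nlinarith [e1, e2]
        rw [h1, h2]
        have hy1 : -|y| ≤ y := neg_abs_le y
        have hy2 : y ≤ |y| := le_abs_self y
        rcases lt_trichotomy x 0 with hx0 | hx0 | hx0
        · rw [Real.sign_of_neg hx0]
          have hxa : |x| = -x := abs_of_neg hx0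
          have i1 : Real.exp x ≤ Real.exp (-(z + y) / 2) := by
            apply Real.exp_le_exp.mpr; nlinarith [hz2]
          have i2 : (1 : ℝ) ≤ Real.exp ((z - y) / 2) := by
            rw [show (1:ℝ) = Real.exp 0 by simp]
            apply Real.exp_le_exp.mpr; nlinarith
          nlinarith
        · simp [hx0]
        · rw [Real.sign_of_pos hx0]
          have hxa : |x| = x := abs_of_pos hx0
          have i1 : Real.exp ((z - y) / 2) ≤ Real.exp x := by
            apply Real.exp_le_exp.mpr; nlinarith [hz2]
          have i2 : Real.exp (-(z + y) / 2) ≤ 1 := by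
            rw [show (1:ℝ) = Real.exp 0 by simp]
            apply Real.exp_le_exp.mpr; nlinarith
          nlinarith
      have hc1 : 0 ≤ (Real.cosh (z / 2) - Real.cosh (y / 2)) ^ (k₁ - 1) := by
        apply Real.rpow_nonneg
        have : Real.cosh (y / 2) ≤ Real.cosh (z / 2) := by
          apply Real.cosh_le_cosh.mpr
          rw [abs_of_nonneg (by linarith : (0:ℝ) ≤ z / 2)]
          calc |y / 2| = |y| / 2 := by rw [abs_div]; norm_num
            _ ≤ z / 2 := by linarith
        linarith
      have hc2 : 0 ≤ (Real.cosh x - Real.cosh z) ^ (k₂ - 1) := by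
        apply Real.rpow_nonneg
        have : Real.cosh z ≤ Real.cosh x := by
          apply Real.cosh_le_cosh.mpr
          rw [abs_of_nonneg hz0]; exact hz2
        linarith
      have hs : 0 ≤ Real.sinh (z / 2) := Real.sinh_nonneg_iff.mpr (by linarith)
      exact mul_nonneg (mul_nonneg (mul_nonneg hσ hc1) hc2) hs
    · -- c/4 nonneg
      unfold c
      have hG1 : 0 < Real.Gamma k₁ := Real.Gamma_pos_of_pos hk₁
      have hG2 : 0 < Real.Gamma k₂ := Real.Gamma_pos_of_pos hk₂
      have hG3 : 0 < Real.Gamma (k₁ + k₂ + 1 / 2) :=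
        Real.Gamma_pos_of_pos (by linarith)
      have h2 : (0:ℝ) < 2 ^ (3 * k₁ + 3 * k₂) := Real.rpow_pos_of_pos (by norm_num) _
      have hπ : 0 < Real.sqrt Real.pi := Real.sqrt_pos.mpr Real.pi_pos
      positivity
  apply setIntegral_nonneg
  · exact measurableSet_lt measurable_const measurable_id.abs
  · intro x hx
    exact mul_nonneg (mul_nonneg (hK x hx) (hg0 x)) (hA x)
end

section
/- Let k₁ > 0 and k₂ > 0 be real parameters and let x, y be real numbers with |x| > |y|. Then K̃(x/2, y/2) := ∫_{|y|/2}^{|x|/2} K_J(w, y/2) · A(2w) dw = (c/k₂) · ∫_{|y|/2}^{|x|/2} (cosh z − cosh(y/2))^{k₁−1} · (cosh x − cosh 2z)^{k₂} · sinh z dz, where K_J(w,v) = 2c·A(2w)^{−1}·|sinh 2w| · ∫_{|v|}^{w} (cosh z − cosh v)^{k₁−1}·(cosh 2w − cosh 2z)^{k₂−1}·sinh z dz. -/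
open Real MeasureTheory intervalIntegral

/-- The kernel `K_J` of the intertwining operator in the Jacobi setting,
for `0 ≤ |v| < w`. -/
noncomputable def KJ (k₁ k₂ w v : ℝ) : ℝ :=
  2 * c k₁ k₂ * (A k₁ k₂ (2 * w))⁻¹ * |Real.sinh (2 * w)| *
    ∫ z in |v|..w,
      (Real.cosh z - Real.cosh v) ^ (k₁ - 1) *
        (Real.cosh (2 * w) - Real.cosh (2 * z)) ^ (k₂ - 1) * Real.sinh z

open ENNReal

lemma st15_cosh_sub_cosh (x y : ℝ) :
    Real.cosh x - Real.cosh y = 2 * Real.sinh ((x + y) / 2) * Real.sinh ((x - y) / 2) := by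
  have h1 : (x + y) / 2 + (x - y) / 2 = x := by ring
  have h2 : (x + y) / 2 - (x - y) / 2 = y := by ring
  have e1 := Real.cosh_add ((x + y) / 2) ((x - y) / 2)
  have e2 := Real.cosh_sub ((x + y) / 2) ((x - y) / 2)
  rw [h1] at e1; rw [h2] at e2; linarith

lemma st15_measurable_rpow (p : ℝ) : Measurable fun t : ℝ => t ^ p := by
  apply measurable_of_continuousOn_compl_singleton (0 : ℝ)
  intro t ht
  exact (Real.continuousAt_rpow_const t p (Or.inl ht)).continuousWithinAt

lemma st15_sinh_le {b t : ℝ} (ht : 0 ≤ t) (htb : t ≤ b) : Real.sinh t ≤ Real.cosh b * t := by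
  have hb : 0 ≤ b := le_trans ht htb
  have key := Convex.norm_image_sub_le_of_norm_hasDerivWithin_le
    (f := Real.sinh) (f' := Real.cosh) (C := Real.cosh b) (s := Set.Icc (0:ℝ) b)
    (fun x _ => (Real.hasDerivAt_sinh x).hasDerivWithinAt)
    (fun x hx => by
      rw [Real.norm_eq_abs, abs_of_pos (Real.cosh_pos x)]
      exact Real.cosh_le_cosh.2 (by rw [abs_of_nonneg hx.1, abs_of_nonneg hb]; exact hx.2))
    (convex_Icc 0 b) (Set.left_mem_Icc.2 hb) ⟨ht, htb⟩
  rw [Real.sinh_zero, sub_zero, sub_zero, Real.norm_eq_abs, Real.norm_eq_abs,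
    abs_of_nonneg ht] at key
  exact le_trans (le_abs_self _) key

lemma st15_model_integrable {r : ℝ} (hr : -1 < r) {a b : ℝ} (ha : 0 ≤ a) (hab : a ≤ b) :
    IntervalIntegrable (fun z => (Real.cosh z - Real.cosh a) ^ r * Real.sinh z) volume a b := by
  rcases le_or_gt 0 r with h0 | h0
  · exact (((Real.continuous_cosh.sub continuous_const).rpow_const fun _ => Or.inr h0).mul
      Real.continuous_sinh).intervalIntegrable a b
  · have hmaj : IntervalIntegrable (fun z =>
        Real.cosh a * Real.cosh b * 2 ^ (-r) * (z - a) ^ (2*r+1)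
          + Real.cosh b * Real.sinh a * Real.sinh a ^ r * (z - a) ^ r) volume a b := by
      have h1 : IntervalIntegrable (fun z : ℝ => (z - a) ^ (2*r+1)) volume a b := by
        have := (intervalIntegrable_rpow' (a := 0) (b := b - a)
          (by linarith : (-1:ℝ) < 2*r+1)).comp_sub_right a
        simpa using this
      have h2 : IntervalIntegrable (fun z : ℝ => (z - a) ^ r) volume a b := by
        have := (intervalIntegrable_rpow' (a := 0) (b := b - a) hr).comp_sub_right a
        simpa using this
      exact (h1.const_mul _).add (h2.const_mul _)
    apply hmaj.mono_fun'
    · exact (((st15_measurable_rpow r).comp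
        ((Real.continuous_cosh.sub continuous_const).measurable)).mul
        Real.continuous_sinh.measurable).aestronglyMeasurable
    · rw [Set.uIoc_of_le hab]
      filter_upwards [ae_restrict_mem measurableSet_Ioc] with z hz
      obtain ⟨hz1, hz2⟩ := hz
      have ht : 0 < z - a := sub_pos.2 hz1
      have hz0 : 0 < z := lt_of_le_of_lt ha hz1
      have hbase : 0 < Real.cosh z - Real.cosh a := by
        rw [sub_pos]
        exact Real.cosh_lt_cosh.2
          (by rw [abs_of_nonneg ha, abs_of_pos hz0]; exact hz1)
      have hid : Real.cosh z - Real.cosh a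
          = 2 * Real.sinh ((z + a) / 2) * Real.sinh ((z - a) / 2) := st15_cosh_sub_cosh z a
      have hs1 : (z - a) / 2 ≤ Real.sinh ((z - a) / 2) := Real.self_le_sinh_iff.2 (by linarith)
      have hs2 : Real.sinh ((z - a) / 2) ≤ Real.sinh ((z + a) / 2) :=
        Real.sinh_le_sinh.2 (by linarith)
      have hsa : Real.sinh a ≤ Real.sinh ((z + a) / 2) := Real.sinh_le_sinh.2 (by linarith)
      have h0a : (0:ℝ) ≤ Real.sinh a := Real.sinh_nonneg_iff.2 ha
      have hb1 : (z - a) * (z - a) / 2 ≤ Real.cosh z - Real.cosh a := by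
        rw [hid]; nlinarith
      have hb2 : Real.sinh a * (z - a) ≤ Real.cosh z - Real.cosh a := by
        rw [hid]; nlinarith
      have hsz : Real.sinh z ≤ Real.sinh a * Real.cosh b + Real.cosh a * (Real.cosh b * (z - a)) := by
        have e : z = a + (z - a) := by ring
        rw [e, Real.sinh_add]
        have hct : Real.cosh (z - a) ≤ Real.cosh b :=
          Real.cosh_le_cosh.2 (by
            rw [abs_of_pos ht, abs_of_nonneg (le_trans ha hab)]; linarith)
        have hst : Real.sinh (z - a) ≤ Real.cosh b * (z - a) :=
          st15_sinh_le ht.le (by linarith)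
        nlinarith [Real.cosh_pos a, Real.cosh_pos (z - a), ht]
      have hnn : 0 ≤ (Real.cosh z - Real.cosh a) ^ r * Real.sinh z :=
        mul_nonneg (Real.rpow_nonneg hbase.le r) (Real.sinh_nonneg_iff.2 hz0.le)
      rw [Real.norm_eq_abs, abs_of_nonneg hnn]
      have hrnn : (0:ℝ) ≤ (Real.cosh z - Real.cosh a) ^ r := Real.rpow_nonneg hbase.le r
      have p1 : (Real.cosh z - Real.cosh a) ^ r ≤ 2 ^ (-r) * ((z-a) ^ r * (z-a) ^ r) := by
        have h := Real.rpow_le_rpow_of_nonpos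
          (by positivity : (0:ℝ) < (z-a)*(z-a)/2) hb1 h0.le
        calc (Real.cosh z - Real.cosh a) ^ r ≤ ((z-a)*(z-a)/2) ^ r := h
          _ = 2 ^ (-r) * ((z-a) ^ r * (z-a) ^ r) := by
              rw [Real.div_rpow (by positivity) (by norm_num : (0:ℝ) ≤ 2),
                Real.mul_rpow ht.le ht.le, Real.rpow_neg (by norm_num : (0:ℝ) ≤ 2)]
              ring
      have p2 : Real.sinh a * (Real.cosh z - Real.cosh a) ^ r
          ≤ Real.sinh a * (Real.sinh a ^ r * (z-a) ^ r) := by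
        rcases eq_or_lt_of_le h0a with heq | hpos
        · rw [← heq]; simp
        · have h := Real.rpow_le_rpow_of_nonpos (by positivity) hb2 h0.le
          rw [Real.mul_rpow hpos.le ht.le] at h
          exact mul_le_mul_of_nonneg_left h h0a
      have e2 : (z-a) ^ (2*r+1) = (z-a) ^ r * (z-a) ^ r * (z-a) := by
        rw [show 2*r+1 = r + r + 1 by ring, Real.rpow_add ht, Real.rpow_add ht, Real.rpow_one]
      have hcb := Real.cosh_pos b
      have hca := Real.cosh_pos a
      have hcbge : (0:ℝ) ≤ Real.cosh a * (Real.cosh b * (z - a)) := by positivity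
      calc (Real.cosh z - Real.cosh a) ^ r * Real.sinh z
          ≤ (Real.cosh z - Real.cosh a) ^ r
            * (Real.sinh a * Real.cosh b + Real.cosh a * (Real.cosh b * (z - a))) :=
            mul_le_mul_of_nonneg_left hsz hrnn
        _ = Real.cosh b * (Real.sinh a * (Real.cosh z - Real.cosh a) ^ r)
            + Real.cosh a * Real.cosh b * ((z - a) * (Real.cosh z - Real.cosh a) ^ r) := by ring
        _ ≤ Real.cosh b * (Real.sinh a * (Real.sinh a ^ r * (z-a) ^ r))
            + Real.cosh a * Real.cosh b * ((z - a) * (2 ^ (-r) * ((z-a) ^ r * (z-a) ^ r))) := by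
            apply add_le_add
            · exact mul_le_mul_of_nonneg_left p2 hcb.le
            · exact mul_le_mul_of_nonneg_left
                (mul_le_mul_of_nonneg_left p1 ht.le) (by positivity)
        _ = Real.cosh a * Real.cosh b * 2 ^ (-r) * (z - a) ^ (2*r+1)
            + Real.cosh b * Real.sinh a * Real.sinh a ^ r * (z - a) ^ r := by
            rw [e2]; ring

lemma st15_u_intble {k₂ : ℝ} (hk₂ : 0 < k₂) {z b : ℝ} (hz : 0 ≤ z) (hzb : z ≤ b) :
    IntervalIntegrable
      (fun w => 2 * ((Real.cosh (2*w) - Real.cosh (2*z)) ^ (k₂-1) * Real.sinh (2*w)))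
      volume z b := by
  have h := (st15_model_integrable (r := k₂ - 1) (by linarith) (a := 2*z) (b := 2*b)
    (by linarith) (by linarith)).comp_mul_left (c := 2)
  have e1 : 2*z/2 = z := by ring
  have e2 : 2*b/2 = b := by ring
  rw [e1, e2] at h
  exact h.const_mul 2

lemma st15_u_ftc {k₂ : ℝ} (hk₂ : 0 < k₂) {z b : ℝ} (hz : 0 < z) (hzb : z ≤ b) :
    ∫ w in z..b, 2 * ((Real.cosh (2*w) - Real.cosh (2*z)) ^ (k₂-1) * Real.sinh (2*w))
      = (Real.cosh (2*b) - Real.cosh (2*z)) ^ k₂ / k₂ := by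
  have hF : ∀ w ∈ Set.Ioo z b, HasDerivWithinAt
      (fun w => (Real.cosh (2*w) - Real.cosh (2*z)) ^ k₂ / k₂)
      (2 * ((Real.cosh (2*w) - Real.cosh (2*z)) ^ (k₂-1) * Real.sinh (2*w))) (Set.Ioi w) w := by
    intro w hw
    have hbase : 0 < Real.cosh (2*w) - Real.cosh (2*z) := by
      rw [sub_pos]
      apply Real.cosh_lt_cosh.2
      rw [abs_of_pos (by linarith : (0:ℝ) < 2*z), abs_of_pos (by linarith [hw.1] : (0:ℝ) < 2*w)]
      linarith [hw.1]
    have h2w : HasDerivAt (fun w : ℝ => 2*w) 2 w := by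
      simpa using (hasDerivAt_id w).const_mul 2
    have h1 : HasDerivAt (fun w => Real.cosh (2*w) - Real.cosh (2*z)) (Real.sinh (2*w) * 2) w :=
      ((Real.hasDerivAt_cosh (2*w)).comp w h2w).sub_const _
    have h2 := (h1.rpow_const (p := k₂) (Or.inl hbase.ne')).div_const k₂
    refine h2.hasDerivWithinAt.congr_deriv ?_
    field_simp
  have hcont : ContinuousOn (fun w => (Real.cosh (2*w) - Real.cosh (2*z)) ^ k₂ / k₂)
      (Set.Icc z b) := by
    apply Continuous.continuousOn
    exact (((Real.continuous_cosh.comp (continuous_const.mul continuous_id)).sub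
      continuous_const).rpow_const fun _ => Or.inr hk₂.le).div_const k₂
  rw [intervalIntegral.integral_eq_sub_of_hasDeriv_right_of_le hzb hcont hF
    (st15_u_intble hk₂ hz.le hzb)]
  simp [Real.zero_rpow hk₂.ne']

lemma st15_swap {a b : ℝ} (hab : a ≤ b) {H : ℝ → ℝ → ℝ≥0∞}
    (hH : Measurable fun p : ℝ × ℝ => H p.1 p.2) :
    ∫⁻ w in Set.Ioc a b, ∫⁻ z in Set.Ioc a w, H w z
      = ∫⁻ z in Set.Ioc a b, ∫⁻ w in Set.Ioc z b, H w z := by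
  have hS : MeasurableSet {q : ℝ × ℝ | q.2 ∈ Set.Ioc a q.1} :=
    (measurableSet_lt measurable_const measurable_snd).inter
      (measurableSet_le measurable_snd measurable_fst)
  have hmeas : AEMeasurable (Function.uncurry fun w z => Set.indicator (Set.Ioc a w) (H w) z)
      ((volume.restrict (Set.Ioc a b)).prod volume) := by
    have he : (Function.uncurry fun w z => Set.indicator (Set.Ioc a w) (H w) z)
        = Set.indicator {q : ℝ × ℝ | q.2 ∈ Set.Ioc a q.1} (fun q => H q.1 q.2) := by
      funext p
      rfl
    rw [he]
    exact (hH.indicator hS).aemeasurable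
  calc ∫⁻ w in Set.Ioc a b, ∫⁻ z in Set.Ioc a w, H w z
      = ∫⁻ w in Set.Ioc a b, ∫⁻ z, Set.indicator (Set.Ioc a w) (H w) z := by
        refine lintegral_congr fun w => ?_
        rw [lintegral_indicator measurableSet_Ioc]
    _ = ∫⁻ z, ∫⁻ w in Set.Ioc a b, Set.indicator (Set.Ioc a w) (H w) z :=
        lintegral_lintegral_swap hmeas
    _ = ∫⁻ z, Set.indicator (Set.Ioc a b) (fun z => ∫⁻ w in Set.Ioc z b, H w z) z := by
        refine lintegral_congr fun z => ?_
        by_cases hz1 : a < z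
        · by_cases hz2 : z ≤ b
          · rw [Set.indicator_of_mem (s := Set.Ioc a b) ⟨hz1, hz2⟩]
            have e1 : ∀ w, Set.indicator (Set.Ioc a w) (H w) z
                = Set.indicator (Set.Ici z) (fun w => H w z) w := by
              intro w
              by_cases h : z ≤ w
              · rw [Set.indicator_of_mem (s := Set.Ioc a w) ⟨hz1, h⟩,
                  Set.indicator_of_mem (s := Set.Ici z) (h : w ∈ Set.Ici z)]
              · rw [Set.indicator_of_notMem (s := Set.Ioc a w) (fun hc => h hc.2),
                  Set.indicator_of_notMem (s := Set.Ici z) (fun hc => h hc)]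
            rw [lintegral_congr e1, lintegral_indicator measurableSet_Ici,
              Measure.restrict_restrict measurableSet_Ici]
            have hset : Set.Ici z ∩ Set.Ioc a b = Set.Icc z b := by
              ext w
              constructor
              · rintro ⟨h1, _, h3⟩; exact ⟨h1, h3⟩
              · rintro ⟨h1, h2⟩; exact ⟨h1, lt_of_lt_of_le hz1 h1, h2⟩
            rw [hset, ← Measure.restrict_congr_set Ioc_ae_eq_Icc]
          · rw [Set.indicator_of_notMem (s := Set.Ioc a b) (fun hc => hz2 hc.2)]
            have h0 : ∀ᵐ w ∂(volume.restrict (Set.Ioc a b)),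
                Set.indicator (Set.Ioc a w) (H w) z = 0 :=
              (ae_restrict_iff' measurableSet_Ioc).2 (ae_of_all _ fun w hw =>
                Set.indicator_of_notMem (s := Set.Ioc a w) (fun hc => hz2 (le_trans hc.2 hw.2)) _)
            rw [lintegral_congr_ae h0, lintegral_zero]
        · rw [Set.indicator_of_notMem (fun hc => hz1 hc.1)]
          have h0 : ∀ w, Set.indicator (Set.Ioc a w) (H w) z = 0 := fun w =>
            Set.indicator_of_notMem (s := Set.Ioc a w) (fun hc => hz1 hc.1) _
          rw [lintegral_congr h0, lintegral_zero]
    _ = ∫⁻ z in Set.Ioc a b, ∫⁻ w in Set.Ioc z b, H w z := by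
        rw [lintegral_indicator measurableSet_Ioc]

lemma st15_key {k₁ k₂ v a b : ℝ} (hk₁ : 0 < k₁) (hk₂ : 0 < k₂) (hva : |v| = a)
    (hab : a ≤ b) :
    ∫ w in a..b, (∫ z in a..w, (Real.cosh z - Real.cosh v) ^ (k₁-1) * Real.sinh z *
        (2 * ((Real.cosh (2*w) - Real.cosh (2*z)) ^ (k₂-1) * Real.sinh (2*w))))
      = ∫ z in a..b, (Real.cosh z - Real.cosh v) ^ (k₁-1) * Real.sinh z *
          ((Real.cosh (2*b) - Real.cosh (2*z)) ^ k₂ / k₂) := by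
  have ha : 0 ≤ a := hva ▸ abs_nonneg v
  have hcv : Real.cosh v = Real.cosh a := by rw [← Real.cosh_abs, hva]
  set g : ℝ → ℝ := fun z => (Real.cosh z - Real.cosh v) ^ (k₁-1) * Real.sinh z with hg
  set u : ℝ → ℝ → ℝ :=
    fun w z => 2 * ((Real.cosh (2*w) - Real.cosh (2*z)) ^ (k₂-1) * Real.sinh (2*w)) with hu
  -- nonnegativity facts
  have hgnn : ∀ z, a < z → 0 ≤ g z := by
    intro z hz
    have hz0 : 0 < z := lt_of_le_of_lt ha hz
    apply mul_nonneg (Real.rpow_nonneg _ _) (Real.sinh_nonneg_iff.2 hz0.le)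
    rw [sub_nonneg, hcv]
    exact Real.cosh_le_cosh.2 (by rw [abs_of_nonneg ha, abs_of_pos hz0]; exact hz.le)
  have hunn : ∀ w z, 0 ≤ z → z ≤ w → 0 ≤ u w z := by
    intro w z hz0 hzw
    apply mul_nonneg (by norm_num)
    apply mul_nonneg (Real.rpow_nonneg _ _) (Real.sinh_nonneg_iff.2 (by linarith))
    rw [sub_nonneg]
    exact Real.cosh_le_cosh.2 (by
      rw [abs_of_nonneg (by linarith : (0:ℝ) ≤ 2*z), abs_of_nonneg (by linarith : (0:ℝ) ≤ 2*w)]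
      linarith)
  -- measurability
  have hgm : Measurable g :=
    ((st15_measurable_rpow (k₁-1)).comp
      ((Real.continuous_cosh.sub continuous_const).measurable)).mul
      Real.continuous_sinh.measurable
  have hum : Measurable fun p : ℝ × ℝ => g p.2 * u p.1 p.2 := by
    apply (hgm.comp measurable_snd).mul
    apply Measurable.const_mul
    apply Measurable.mul
    · exact (st15_measurable_rpow (k₂-1)).comp
        ((Real.continuous_cosh.comp (continuous_const.mul continuous_fst)).sub
          (Real.continuous_cosh.comp (continuous_const.mul continuous_snd))).measurable
    · exact (Real.continuous_sinh.comp (continuous_const.mul continuous_fst)).measurable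
  set Φ : ℝ × ℝ → ℝ≥0∞ := fun p =>
    Set.indicator {q : ℝ × ℝ | q.2 ∈ Set.Ioc a q.1}
      (fun q => ENNReal.ofReal (g q.2 * u q.1 q.2)) p with hΦ
  have hS : MeasurableSet {q : ℝ × ℝ | q.2 ∈ Set.Ioc a q.1} :=
    (measurableSet_lt measurable_const measurable_snd).inter
      (measurableSet_le measurable_snd measurable_fst)
  have hΦm : Measurable Φ := (hum.ennreal_ofReal).indicator hS
  have hGm : Measurable fun w => ∫⁻ z, Φ (w, z) := hΦm.lintegral_prod_right'
  have hΦeq : ∀ w, (∫⁻ z in Set.Ioc a w, ENNReal.ofReal (g z * u w z)) = ∫⁻ z, Φ (w, z) := by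
    intro w
    rw [← lintegral_indicator measurableSet_Ioc]
    refine lintegral_congr fun z => ?_
    rfl
  rw [intervalIntegral.integral_of_le hab, intervalIntegral.integral_of_le hab]
  have step2 : ∀ w ∈ Set.Ioc a b, (∫ z in a..w, g z * u w z) = (∫⁻ z, Φ (w, z)).toReal := by
    intro w hw
    rw [intervalIntegral.integral_of_le hw.1.le, ← hΦeq w,
      MeasureTheory.integral_eq_lintegral_of_nonneg_ae]
    · exact (ae_restrict_iff' measurableSet_Ioc).2 (ae_of_all _ fun z hz =>
        mul_nonneg (hgnn z hz.1) (hunn w z (le_trans ha hz.1.le) hz.2))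
    · exact (hum.comp (measurable_const.prodMk measurable_id)).aestronglyMeasurable
  rw [MeasureTheory.setIntegral_congr_fun measurableSet_Ioc step2]
  have hswap : ∫⁻ w in Set.Ioc a b, ∫⁻ z, Φ (w, z)
      = ∫⁻ z in Set.Ioc a b,
          ENNReal.ofReal (g z * ((Real.cosh (2*b) - Real.cosh (2*z)) ^ k₂ / k₂)) := by
    calc ∫⁻ w in Set.Ioc a b, ∫⁻ z, Φ (w, z)
        = ∫⁻ w in Set.Ioc a b, ∫⁻ z in Set.Ioc a w, ENNReal.ofReal (g z * u w z) :=
          lintegral_congr fun w => (hΦeq w).symm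
      _ = ∫⁻ z in Set.Ioc a b, ∫⁻ w in Set.Ioc z b, ENNReal.ofReal (g z * u w z) :=
          st15_swap hab hum.ennreal_ofReal
      _ = ∫⁻ z in Set.Ioc a b,
            ENNReal.ofReal (g z * ((Real.cosh (2*b) - Real.cosh (2*z)) ^ k₂ / k₂)) := by
          refine setLIntegral_congr_fun measurableSet_Ioc (fun z hz => ?_)
          have hz0 : 0 < z := lt_of_le_of_lt ha hz.1
          have hint : Integrable (fun w => g z * u w z) (volume.restrict (Set.Ioc z b)) := by
            have h := (st15_u_intble hk₂ hz0.le hz.2).const_mul (g z)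
            rwa [intervalIntegrable_iff_integrableOn_Ioc_of_le hz.2] at h
          have hnn : 0 ≤ᵐ[volume.restrict (Set.Ioc z b)] fun w => g z * u w z :=
            (ae_restrict_iff' measurableSet_Ioc).2 (ae_of_all _ fun w hw =>
              mul_nonneg (hgnn z hz.1) (hunn w z hz0.le hw.1.le))
          rw [← MeasureTheory.ofReal_integral_eq_lintegral_ofReal hint hnn]
          congr 1
          rw [← intervalIntegral.integral_of_le hz.2,
            intervalIntegral.integral_const_mul, st15_u_ftc hk₂ hz0 hz.2]
  have hint2 : Integrable
      (fun z => g z * ((Real.cosh (2*b) - Real.cosh (2*z)) ^ k₂ / k₂))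
      (volume.restrict (Set.Ioc a b)) := by
    have hgi : IntervalIntegrable g volume a b := by
      have := st15_model_integrable (r := k₁ - 1) (by linarith) ha hab
      rw [hg]
      simp_rw [hcv]
      exact this
    have hXc : ContinuousOn (fun z => (Real.cosh (2*b) - Real.cosh (2*z)) ^ k₂ / k₂)
        (Set.uIcc a b) :=
      (((continuous_const.sub
        (Real.continuous_cosh.comp (continuous_const.mul continuous_id))).rpow_const
        fun _ => Or.inr hk₂.le).div_const k₂).continuousOn
    have h := hgi.mul_continuousOn hXc
    rwa [intervalIntegrable_iff_integrableOn_Ioc_of_le hab] at h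
  have hnn2 : 0 ≤ᵐ[volume.restrict (Set.Ioc a b)]
      fun z => g z * ((Real.cosh (2*b) - Real.cosh (2*z)) ^ k₂ / k₂) :=
    (ae_restrict_iff' measurableSet_Ioc).2 (ae_of_all _ fun z hz =>
      mul_nonneg (hgnn z hz.1)
        (div_nonneg (Real.rpow_nonneg (by
          rw [sub_nonneg]
          exact Real.cosh_le_cosh.2 (by
            have hz0 : 0 < z := lt_of_le_of_lt ha hz.1
            rw [abs_of_nonneg (by linarith : (0:ℝ) ≤ 2*z),
              abs_of_nonneg (by linarith [le_trans ha hab] : (0:ℝ) ≤ 2*b)]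
            linarith [hz.2])) _) hk₂.le))
  have hRHS : ∫⁻ z in Set.Ioc a b,
      ENNReal.ofReal (g z * ((Real.cosh (2*b) - Real.cosh (2*z)) ^ k₂ / k₂))
      = ENNReal.ofReal (∫ z in Set.Ioc a b,
          g z * ((Real.cosh (2*b) - Real.cosh (2*z)) ^ k₂ / k₂)) :=
    (MeasureTheory.ofReal_integral_eq_lintegral_ofReal hint2 hnn2).symm
  have hGfin : ∀ᵐ w ∂(volume.restrict (Set.Ioc a b)), (∫⁻ z, Φ (w, z)) < ⊤ := by
    refine ae_lt_top hGm ?_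
    rw [hswap, hRHS]
    exact ENNReal.ofReal_ne_top
  rw [MeasureTheory.integral_toReal hGm.aemeasurable hGfin, hswap, hRHS,
    ENNReal.toReal_ofReal]
  exact MeasureTheory.setIntegral_nonneg measurableSet_Ioc fun z hz =>
    mul_nonneg (hgnn z hz.1)
      (div_nonneg (Real.rpow_nonneg (by
        rw [sub_nonneg]
        exact Real.cosh_le_cosh.2 (by
          have hz0 : 0 < z := lt_of_le_of_lt ha hz.1
          rw [abs_of_nonneg (by linarith : (0:ℝ) ≤ 2*z),
            abs_of_nonneg (by linarith [le_trans ha hab] : (0:ℝ) ≤ 2*b)]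
          linarith [hz.2])) _) hk₂.le)

theorem stmt15 (k₁ k₂ : ℝ) (hk₁ : 0 < k₁) (hk₂ : 0 < k₂)
    (x y : ℝ) (hxy : |y| < |x|) :
    ∫ w in (|y| / 2)..(|x| / 2), KJ k₁ k₂ w (y / 2) * A k₁ k₂ (2 * w)
      = c k₁ k₂ / k₂ *
        ∫ z in (|y| / 2)..(|x| / 2),
          (Real.cosh z - Real.cosh (y / 2)) ^ (k₁ - 1) *
            (Real.cosh x - Real.cosh (2 * z)) ^ k₂ * Real.sinh z := by
  set a := |y| / 2 with ha'
  set b := |x| / 2 with hb'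
  have ha : 0 ≤ a := by rw [ha']; positivity
  have hab : a < b := by rw [ha', hb']; linarith
  have habs : |y / 2| = a := by rw [abs_div, abs_two, ha']
  have stepA : Set.EqOn (fun w => KJ k₁ k₂ w (y / 2) * A k₁ k₂ (2 * w))
      (fun w => c k₁ k₂ * ∫ z in a..w,
        (Real.cosh z - Real.cosh (y/2)) ^ (k₁-1) * Real.sinh z *
          (2 * ((Real.cosh (2*w) - Real.cosh (2*z)) ^ (k₂-1) * Real.sinh (2*w))))
      (Set.uIcc a b) := by
    intro w hw
    rw [Set.uIcc_of_le hab.le] at hw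
    have hw0 : 0 ≤ w := le_trans ha hw.1
    simp only
    rcases eq_or_lt_of_le hw0 with h0 | h0
    · have haw : a = 0 := le_antisymm (h0 ▸ hw.1) ha
      have hA0 : A k₁ k₂ (2 * w) = 0 := by
        rw [← h0, mul_zero]
        simp [A, Real.zero_rpow (ne_of_gt (mul_pos two_pos hk₁))]
      rw [hA0, mul_zero, haw, ← h0]
      simp
    · have hApos : 0 < A k₁ k₂ (2 * w) := by
        simp only [A]
        rw [show 2 * w / 2 = w by ring]
        have h1 : 0 < |2 * Real.sinh w| :=
          abs_pos.2 (ne_of_gt (mul_pos two_pos (Real.sinh_pos_iff.2 h0)))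
        have h2 : 0 < |2 * Real.sinh (2 * w)| :=
          abs_pos.2 (ne_of_gt (mul_pos two_pos (Real.sinh_pos_iff.2 (by linarith))))
        exact mul_pos (Real.rpow_pos_of_pos h1 _) (Real.rpow_pos_of_pos h2 _)
      have hsp : 0 < Real.sinh (2 * w) := Real.sinh_pos_iff.2 (by linarith)
      have hJ : (∫ z in a..w,
          (Real.cosh z - Real.cosh (y/2)) ^ (k₁-1) * Real.sinh z *
            (2 * ((Real.cosh (2*w) - Real.cosh (2*z)) ^ (k₂-1) * Real.sinh (2*w))))
          = 2 * Real.sinh (2*w) * ∫ z in a..w,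
              (Real.cosh z - Real.cosh (y/2)) ^ (k₁ - 1) *
                (Real.cosh (2 * w) - Real.cosh (2 * z)) ^ (k₂ - 1) * Real.sinh z := by
        rw [← intervalIntegral.integral_const_mul]
        refine intervalIntegral.integral_congr fun z _ => ?_
        ring
      rw [hJ]
      simp only [KJ]
      rw [habs, abs_of_pos hsp]
      have hinv : (A k₁ k₂ (2*w))⁻¹ * A k₁ k₂ (2*w) = 1 := inv_mul_cancel₀ hApos.ne'
      set J := ∫ z in a..w,
        (Real.cosh z - Real.cosh (y/2)) ^ (k₁ - 1) *
          (Real.cosh (2 * w) - Real.cosh (2 * z)) ^ (k₂ - 1) * Real.sinh z with hJdef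
      linear_combination (2 * c k₁ k₂ * Real.sinh (2*w) * J) * hinv
  rw [intervalIntegral.integral_congr stepA, intervalIntegral.integral_const_mul,
    st15_key hk₁ hk₂ habs hab.le]
  have h2b : 2 * b = |x| := by rw [hb']; ring
  rw [h2b, Real.cosh_abs]
  have hfin : (∫ z in a..b, (Real.cosh z - Real.cosh (y/2)) ^ (k₁-1) * Real.sinh z *
      ((Real.cosh x - Real.cosh (2*z)) ^ k₂ / k₂))
      = (∫ z in a..b, (Real.cosh z - Real.cosh (y / 2)) ^ (k₁ - 1) *
          (Real.cosh x - Real.cosh (2 * z)) ^ k₂ * Real.sinh z) / k₂ := by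
    rw [← intervalIntegral.integral_div]
    refine intervalIntegral.integral_congr fun z _ => ?_
    ring
  rw [hfin]
  ring
end
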